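/- Assume MM-1, A1 and A2. Then for every τ in the interior of Θ, the first-order tangency identity ∇f(τ) − ∇ψ(τ) + (Dφ(τ))* E_π[S̄(Z,τ)] = 0 holds; here (Dφ(τ))* v denotes the gradient at τ of the map θ ↦ ⟨v, φ(θ)⟩ (i.e. the transposed Jacobian of φ at τ applied to v ∈ ℝ^q). -/

import Mathlib

open MeasureTheory Set
open scoped RealInnerProductSpace

/-- Assume MM-1, A1 and A2. Then for every `τ` in the interior of `Θ`
the first-order tangency identity `∇f(τ) − ∇ψ(τ) + (Dφ(τ))* E_π[S̄(Z,τ)] = 0` holds,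
where `(Dφ(τ))* v` is the gradient at `τ` of `θ ↦ ⟨v, φ(θ)⟩`. -/
theorem surrogate_tangency_identity
    {d q p : ℕ}
    (Θ : Set (EuclideanSpace ℝ (Fin d)))
    (Sset : Set (EuclideanSpace ℝ (Fin q)))
    (ψ : EuclideanSpace ℝ (Fin d) → ℝ)
    (φ : EuclideanSpace ℝ (Fin d) → EuclideanSpace ℝ (Fin q))
    (π : Measure (EuclideanSpace ℝ (Fin p))) [IsProbabilityMeasure π]
    (ℓ : EuclideanSpace ℝ (Fin p) → EuclideanSpace ℝ (Fin d) → ℝ)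
    (f : EuclideanSpace ℝ (Fin d) → ℝ)
    (barS : EuclideanSpace ℝ (Fin p) → EuclideanSpace ℝ (Fin d) → EuclideanSpace ℝ (Fin q))
    -- S is a convex subset of ℝ^q
    (hS_convex : Convex ℝ Sset)
    -- the objective f(θ) = E_π[ℓ(Z,θ)], with ℓ measurable and π-integrable
    (hℓ_meas : Measurable (Function.uncurry ℓ))
    (hℓ_int : ∀ θ ∈ Θ, Integrable (fun z => ℓ z θ) π)
    (hf : ∀ θ, f θ = ∫ z, ℓ z θ ∂π)
    -- MM-1: S̄ is measurable, S-valued and integrable, with mean in S, and the surrogate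
    -- majorizes f tangentially
    (hbarS_meas : Measurable (Function.uncurry barS))
    (hbarS_mem : ∀ z, ∀ τ ∈ Θ, barS z τ ∈ Sset)
    (hbarS_int : ∀ τ ∈ Θ, Integrable (fun z => barS z τ) π)
    (hmean_mem : ∀ τ ∈ Θ, (∫ z, barS z τ ∂π) ∈ Sset)
    (hMM1 : ∀ τ ∈ Θ, ∀ θ ∈ Θ,
      f θ ≤ f τ + ψ θ - ψ τ - ⟪∫ z, barS z τ ∂π, φ θ - φ τ⟫)
    -- A1: convexity of the smooth part of the surrogate; regularity of ψ, φ
    (hA1_convex : ∀ s ∈ Sset, ConvexOn ℝ Set.univ (fun θ => ψ θ - ⟪s, φ θ⟫))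
    (hint_ne : (interior Θ).Nonempty)
    (hψ_C1 : ContDiffOn ℝ 1 ψ (interior Θ))
    (hφ_C1 : ContDiffOn ℝ 1 φ (interior Θ))
    -- A2: f is C¹ on the interior of Θ
    (hf_C1 : ContDiffOn ℝ 1 f (interior Θ)) :
    ∀ τ ∈ interior Θ,
      gradient f τ - gradient ψ τ
        + gradient (fun θ => ⟪∫ z, barS z τ ∂π, φ θ⟫) τ = 0 := by

  intro τ hτ
  have hτΘ : τ ∈ Θ := interior_subset hτ
  set s : EuclideanSpace ℝ (Fin q) := ∫ z, barS z τ ∂π with hs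
  have hnhds : interior Θ ∈ nhds τ := isOpen_interior.mem_nhds hτ
  have hfd : DifferentiableAt ℝ f τ :=
    ((hf_C1.contDiffAt (isOpen_interior.mem_nhds hτ)).differentiableAt one_ne_zero)
  have hψd : DifferentiableAt ℝ ψ τ :=
    ((hψ_C1.contDiffAt (isOpen_interior.mem_nhds hτ)).differentiableAt one_ne_zero)
  have hφd : DifferentiableAt ℝ φ τ :=
    ((hφ_C1.contDiffAt (isOpen_interior.mem_nhds hτ)).differentiableAt one_ne_zero)
  have hhd : DifferentiableAt ℝ (fun θ => ⟪s, φ θ⟫) τ :=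
    (differentiableAt_const s).inner ℝ hφd
  set g : EuclideanSpace ℝ (Fin d) → ℝ := fun θ => f θ - ψ θ + ⟪s, φ θ⟫ with hg
  have hgd : DifferentiableAt ℝ g τ := (hfd.sub hψd).add hhd
  have hmax : IsLocalMax g τ := by
    filter_upwards [hnhds] with θ hθ
    have h1 := hMM1 τ hτΘ θ (interior_subset hθ)
    have h2 : ⟪s, φ θ - φ τ⟫ = ⟪s, φ θ⟫ - ⟪s, φ τ⟫ := inner_sub_right s _ _
    simp only [hg]
    rw [h2] at h1
    linarith
  have hfg : fderiv ℝ g τ = 0 := hmax.fderiv_eq_zero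
  have hsum : fderiv ℝ f τ - fderiv ℝ ψ τ + fderiv ℝ (fun θ => ⟪s, φ θ⟫) τ = 0 := by
    rw [← fderiv_sub hfd hψd, ← fderiv_add (hfd.sub hψd) hhd]
    exact hfg
  have := congrArg (InnerProductSpace.toDual ℝ (EuclideanSpace ℝ (Fin d))).symm hsum
  simpa only [gradient, map_add, map_sub, map_zero] using this
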